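/- Let A be a set of k ≥ 3 positive integers, let r be a positive integer, and let H = {h_1, …, h_t} be a set of t ≥ 1 positive integers with (k−1)r ≤ h_1 < h_2 < ⋯ < h_t ≤ kr. Then |H^{(r)}A| ≥ m_1·r·(k − m_1) + (h_1 − m_1·r)·(k − 2m_1 − 1) + t, where m_1 = ⌊h_1/r⌋. -/

import Mathlib

/-- The generalized `h`-fold sumset `h^(r)A`: all sums of `h` elements of `A`
where every summand appears at most `r` times. -/
def genSumset (r h : ℕ) (A : Finset ℤ) : Set ℤ :=
  {x | ∃ lam : ℤ → ℕ, (∀ a, lam a ≤ r) ∧ (∀ a ∉ A, lam a = 0) ∧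
    (∑ a ∈ A, lam a) = h ∧ (∑ a ∈ A, (lam a : ℤ) * a) = x}

/-- The generalized `H`-fold sumset `H^(r)A = ⋃_{h ∈ H} h^(r)A`. -/
def HSumset (r : ℕ) (H : Finset ℕ) (A : Finset ℤ) : Set ℤ :=
  ⋃ h ∈ H, genSumset r h A

section helpers

variable {k : ℕ} {A : Finset ℤ} (hA : A.card = k)

lemma sumA_eq {M : Type*} [AddCommMonoid M] (f : ℤ → M) :
    ∑ x ∈ A, f x = ∑ i : Fin k, f (A.orderEmbOfFin hA i) := by
  symm
  apply Finset.sum_bij (fun i _ => A.orderEmbOfFin hA i)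
  · intro i _; exact A.orderEmbOfFin_mem hA i
  · intro i _ j _ hij; exact (A.orderEmbOfFin hA).injective hij
  · intro x hx
    have : x ∈ Set.range (A.orderEmbOfFin hA) := by
      rw [Finset.range_orderEmbOfFin]; exact hx
    obtain ⟨i, hi⟩ := this
    exact ⟨i, Finset.mem_univ i, hi⟩
  · intro i _; rfl

lemma mem_gen (r hh : ℕ) (w : Fin k → ℕ) (hw : ∀ i, w i ≤ r)
    (hs : ∑ i, w i = hh) :
    (∑ i : Fin k, (w i : ℤ) * (A.orderEmbOfFin hA i)) ∈ genSumset r hh A := by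
  classical
  set a := A.orderEmbOfFin hA with ha
  refine ⟨fun x => if hx : x ∈ A then
      w ((A.orderIsoOfFin hA).symm ⟨x, hx⟩) else 0, ?_, ?_, ?_, ?_⟩
  · intro x; by_cases hx : x ∈ A <;> simp [hx, hw]
  · intro x hx; simp [hx]
  · rw [sumA_eq hA]
    rw [← hs]
    apply Finset.sum_congr rfl
    intro i _
    have hmem := A.orderEmbOfFin_mem hA i
    rw [dif_pos hmem]
    congr 1
    have : (⟨a i, hmem⟩ : {x // x ∈ A}) = A.orderIsoOfFin hA i := by
      ext; simp [ha]
    rw [this, OrderIso.symm_apply_apply]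
  · rw [sumA_eq hA]
    apply Finset.sum_congr rfl
    intro i _
    have hmem := A.orderEmbOfFin_mem hA i
    dsimp only
    rw [dif_pos hmem]
    congr 2
    have : (⟨a i, hmem⟩ : {x // x ∈ A}) = A.orderIsoOfFin hA i := by
      ext; simp [ha]
    rw [this, OrderIso.symm_apply_apply]

lemma eval_two (i1 i2 : Fin k) (h12 : i1 ≠ i2) (x y z : ℤ) (c : Fin k → ℤ) :
    ∑ i : Fin k, (if i = i1 then x else if i = i2 then y else z) * c i
      = x * c i1 + y * c i2 + z * ((∑ i, c i) - c i1 - c i2) := by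
  classical
  rw [← Finset.add_sum_erase _ _ (Finset.mem_univ i1)]
  rw [← Finset.add_sum_erase _ _ (Finset.mem_erase.2 ⟨Ne.symm h12, Finset.mem_univ i2⟩)]
  have h1 : ∀ j ∈ (Finset.univ.erase i1).erase i2,
      (if j = i1 then x else if j = i2 then y else z) * c j = z * c j := by
    intro j hj
    simp only [Finset.mem_erase] at hj
    rw [if_neg hj.2.1, if_neg hj.1]
  rw [Finset.sum_congr rfl h1, ← Finset.mul_sum]
  have h2 : ∑ j ∈ (Finset.univ.erase i1).erase i2, c j = (∑ i, c i) - c i1 - c i2 := by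
    rw [Finset.sum_erase_eq_sub (Finset.mem_erase.2 ⟨Ne.symm h12, Finset.mem_univ i2⟩),
      Finset.sum_erase_eq_sub (Finset.mem_univ i1)]
  rw [h2, if_pos rfl, if_neg (Ne.symm h12), if_pos rfl]
  ring

lemma eval_two_nat (i1 i2 : Fin k) (h12 : i1 ≠ i2) (x y z : ℕ) :
    ∑ i : Fin k, (if i = i1 then x else if i = i2 then y else z)
      = x + y + (k - 2) * z := by
  classical
  rw [← Finset.add_sum_erase _ _ (Finset.mem_univ i1)]
  rw [← Finset.add_sum_erase _ _ (Finset.mem_erase.2 ⟨Ne.symm h12, Finset.mem_univ i2⟩)]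
  have h1 : ∀ j ∈ (Finset.univ.erase i1).erase i2,
      (if j = i1 then x else if j = i2 then y else z) = z := by
    intro j hj
    simp only [Finset.mem_erase] at hj
    rw [if_neg hj.2.1, if_neg hj.1]
  rw [Finset.sum_congr rfl h1, Finset.sum_const, if_pos rfl, if_neg (Ne.symm h12), if_pos rfl]
  have hcard : ((Finset.univ.erase i1).erase i2).card = k - 2 := by
    rw [Finset.card_erase_of_mem (Finset.mem_erase.2 ⟨Ne.symm h12, Finset.mem_univ i2⟩),
      Finset.card_erase_of_mem (Finset.mem_univ i1)]
    simp; omega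
  rw [hcard, smul_eq_mul]; ring

end helpers

lemma HSumset_finite (r : ℕ) (H : Finset ℕ) (A : Finset ℤ)
    (hApos : ∀ a ∈ A, 0 < a) : (HSumset r H A).Finite := by
  apply Set.Finite.subset (Set.finite_Icc (0:ℤ) (r * ∑ x ∈ A, x))
  rintro x hx
  simp only [HSumset, Set.mem_iUnion] at hx
  obtain ⟨hh, _, lam, hle, _, _, hval⟩ := hx
  subst hval
  constructor
  · apply Finset.sum_nonneg
    intro i hi
    exact mul_nonneg (by positivity) (le_of_lt (hApos i hi))
  · rw [Finset.mul_sum]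
    apply Finset.sum_le_sum
    intro i hi
    exact mul_le_mul_of_nonneg_right (by exact_mod_cast hle i) (le_of_lt (hApos i hi))

theorem stmt_2 (k t r : ℕ) (A : Finset ℤ) (H : Finset ℕ) (h : ℕ → ℕ)
    (hk : 3 ≤ k) (hAcard : A.card = k) (hApos : ∀ a ∈ A, 0 < a)
    (hr1 : 1 ≤ r) (ht : 1 ≤ t) (hHcard : H.card = t) (hHpos : ∀ x ∈ H, 0 < x)
    (hmono : StrictMonoOn h (Set.Icc 1 t))
    (hHim : H = (Finset.Icc 1 t).image h)
    (hlow : (k - 1) * r ≤ h 1) (hmax : h t ≤ k * r) :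
    ((h 1 / r : ℕ) : ℤ) * r * ((k : ℤ) - ((h 1 / r : ℕ) : ℤ))
      + ((h 1 : ℤ) - ((h 1 / r : ℕ) : ℤ) * r) * ((k : ℤ) - 2 * ((h 1 / r : ℕ) : ℤ) - 1)
      + t ≤ ((HSumset r H A).ncard : ℤ) := by
  classical
  -- monotonicity facts about h
  have hmle : ∀ j1 j2, 1 ≤ j1 → j1 ≤ j2 → j2 ≤ t → h j1 ≤ h j2 := by
    intro j1 j2 h1 h2 h3
    exact hmono.monotoneOn ⟨h1, by omega⟩ ⟨by omega, h3⟩ h2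
  have hmlt : ∀ j1 j2, 1 ≤ j1 → j1 < j2 → j2 ≤ t → h j1 < h j2 := by
    intro j1 j2 h1 h2 h3
    exact hmono ⟨h1, by omega⟩ ⟨by omega, h3⟩ h2
  have hup : h 1 ≤ k * r := le_trans (hmle 1 t le_rfl ht le_rfl) hmax
  -- basic arithmetic facts
  set d := k * r - h 1 with hd
  set ρ := h 1 - (k - 1) * r with hρ
  have hk1r : (k - 2) * r + r = (k - 1) * r := by
    have e : k - 1 = k - 2 + 1 := by omega
    rw [e, Nat.succ_mul]
  have hkr : (k - 1) * r + r = k * r := by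
    have e : k = k - 1 + 1 := by omega
    conv_rhs => rw [e]
    rw [Nat.succ_mul]
  have hρd : ρ + d = r := by omega
  have hdr : d ≤ r := by omega
  suffices hcount : (k - 1) * d + t ≤ (HSumset r H A).ncard by
    have hNZ : (((k - 1) * d + t : ℕ) : ℤ) ≤ ((HSumset r H A).ncard : ℤ) := by
      exact_mod_cast hcount
    have hkrZ : ((k * r : ℕ) : ℤ) = (k : ℤ) * r := by push_cast; ring
    have hdZ : ((d : ℕ) : ℤ) = (k : ℤ) * r - h 1 := by omega
    have hNe : (((k - 1) * d + t : ℕ) : ℤ) = ((k : ℤ) - 1) * ((k : ℤ) * r - h 1) + t := by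
      push_cast [Nat.cast_sub (by omega : 1 ≤ k)]
      rw [hdZ]
    rw [hNe] at hNZ
    rcases eq_or_lt_of_le hup with hcase | hcase
    · have hdiv1 : h 1 / r = k := by rw [hcase, Nat.mul_div_cancel _ (by omega)]
      rw [hdiv1]
      have hh1Z : (h 1 : ℤ) = (k : ℤ) * r := by omega
      refine le_trans (le_of_eq ?_) hNZ
      rw [hh1Z]; ring
    · have hdiv1 : h 1 / r = k - 1 := by
        apply Nat.div_eq_of_lt_le hlow
        have e : k - 1 + 1 = k := by omega
        rw [e]; exact hcase
      rw [hdiv1]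
      have hc : ((k - 1 : ℕ) : ℤ) = (k : ℤ) - 1 := by omega
      rw [hc]
      refine le_trans (le_of_eq ?_) hNZ
      ring
  -- the ordered elements of A
  set a : Fin k → ℤ := fun i => A.orderEmbOfFin hAcard i with ha
  have hamono : StrictMono a := fun i j hij => (A.orderEmbOfFin hAcard).strictMono hij
  have hapos : ∀ i, 0 < a i := fun i => hApos _ (A.orderEmbOfFin_mem hAcard i)
  set T : ℤ := ∑ i, a i with hT
  -- the value function
  set val : Fin k → Fin k → ℕ → ℕ → ℕ → ℤ := fun i1 i2 x y z =>
    ∑ i : Fin k, ((if i = i1 then x else if i = i2 then y else z : ℕ) : ℤ) * a i with hval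
  have valeq : ∀ (i1 i2 : Fin k) (x y z : ℕ), i1 ≠ i2 →
      val i1 i2 x y z = (x:ℤ) * a i1 + (y:ℤ) * a i2 + (z:ℤ) * (T - a i1 - a i2) := by
    intro i1 i2 x y z h12
    simp only [hval]
    have e : ∀ i ∈ Finset.univ, ((if i = i1 then x else if i = i2 then y else z : ℕ) : ℤ) * a i
        = (if i = i1 then (x:ℤ) else if i = i2 then (y:ℤ) else (z:ℤ)) * a i := by
      intro i _; split_ifs <;> rfl
    rw [Finset.sum_congr rfl e, eval_two i1 i2 h12]
  have memval : ∀ (i1 i2 : Fin k) (x y z hh : ℕ), i1 ≠ i2 → x ≤ r → y ≤ r → z ≤ r →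
      x + y + (k - 2) * z = hh → hh ∈ H → val i1 i2 x y z ∈ HSumset r H A := by
    intro i1 i2 x y z hh h12 hx hy hz hsum hhH
    simp only [HSumset, Set.mem_iUnion]
    refine ⟨hh, hhH, ?_⟩
    have := mem_gen hAcard r hh (fun i => if i = i1 then x else if i = i2 then y else z)
      (fun i => by split_ifs <;> assumption)
      (by rw [eval_two_nat i1 i2 h12]; exact hsum)
    exact this
  -- index functions and the chain
  have hk0 : 0 < k := by omega
  set I1 : ℕ → Fin k := fun n => ⟨k - 1 - n / d, lt_of_le_of_lt (Nat.sub_le _ _) (by omega)⟩ with hI1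
  set I2 : ℕ → Fin k := fun n => ⟨k - 2 - n / d, lt_of_le_of_lt (Nat.sub_le _ _) (by omega)⟩ with hI2
  set z0 : Fin k := ⟨0, by omega⟩ with hz0
  set z1 : Fin k := ⟨1, by omega⟩ with hz1
  have hz01 : z0 ≠ z1 := by simp [hz0, hz1, Fin.ext_iff]
  clear_value d ρ a T val z0 z1
  set N1 := (k - 1) * d with hN1
  set N := N1 + t with hN
  set F : ℕ → ℤ := fun n =>
    if n < N1 then val (I1 n) (I2 n) (ρ + n % d) (r - n % d) r
    else if n < N then val z0 z1 (h (n - N1 + 1) - (k - 1) * r) r r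
    else val z0 z1 (h t - (k - 1) * r) r r + ((n - (N - 1) : ℕ) : ℤ) with hF
  clear_value I1 I2 N1 N F
  -- facts in zone A
  have hd0 : ∀ n, n < N1 → 0 < d := by
    intro n hn
    rcases Nat.eq_zero_or_pos d with h0 | h0
    · rw [hN1, h0, mul_zero] at hn; omega
    · exact h0
  have hqlt : ∀ n, n < N1 → n / d < k - 1 := by
    intro n hn
    have hd' := hd0 n hn
    rw [hN1] at hn
    exact (Nat.div_lt_iff_lt_mul hd').2 hn
  have hI12 : ∀ n, n < N1 → I1 n ≠ I2 n := by
    intro n hn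
    have := hqlt n hn
    simp only [hI1, hI2, ne_eq, Fin.mk.injEq]
    omega
  have hI21lt : ∀ n, n < N1 → a (I2 n) < a (I1 n) := by
    intro n hn
    have := hqlt n hn
    apply hamono
    simp only [hI1, hI2, Fin.lt_def]
    omega
  -- membership
  have h1H : h 1 ∈ H := by
    rw [hHim]
    exact Finset.mem_image.2 ⟨1, Finset.mem_Icc.2 ⟨le_rfl, ht⟩, rfl⟩
  have hjH : ∀ j, 1 ≤ j → j ≤ t → h j ∈ H := by
    intro j hj1 hj2
    rw [hHim]
    exact Finset.mem_image.2 ⟨j, Finset.mem_Icc.2 ⟨hj1, hj2⟩, rfl⟩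
  have hmemF : ∀ n, n < N → F n ∈ HSumset r H A := by
    intro n hn
    by_cases hnA : n < N1
    · have hs := Nat.mod_lt n (hd0 n hnA)
      simp only [hF, if_pos hnA]
      apply memval _ _ _ _ _ (h 1) (hI12 n hnA) (by omega) (by omega) le_rfl (by omega) h1H
    · have hj1 : 1 ≤ n - N1 + 1 := by omega
      have hj2 : n - N1 + 1 ≤ t := by omega
      have hh1 : (k - 1) * r ≤ h (n - N1 + 1) := le_trans hlow (hmle 1 _ le_rfl hj1 hj2)
      have hh2 : h (n - N1 + 1) ≤ k * r := le_trans (hmle _ t hj1 hj2 le_rfl) hmax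
      simp only [hF, if_neg hnA, if_pos hn]
      apply memval _ _ _ _ _ (h (n - N1 + 1)) hz01 (by omega) le_rfl le_rfl (by omega)
        (hjH _ hj1 hj2)
  -- strict monotonicity
  have hstrict : StrictMono F := by
    apply strictMono_nat_of_lt_succ
    intro n
    by_cases hc1 : n + 1 < N1
    · -- zone A internal
      have hnA : n < N1 := by omega
      have hd' := hd0 n hnA
      have hq := hqlt n hnA
      have hs : n % d < d := Nat.mod_lt n hd'
      have hdm := Nat.div_add_mod n d
      by_cases hs2 : n % d + 1 < d
      · have h1 : n + 1 = (n % d + 1) + d * (n / d) := by omega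
        have hdiv : (n + 1) / d = n / d := by
          rw [h1, Nat.add_mul_div_left _ _ hd', Nat.div_eq_of_lt hs2, zero_add]
        have hmod : (n + 1) % d = n % d + 1 := by
          rw [h1, Nat.add_mul_mod_self_left, Nat.mod_eq_of_lt hs2]
        have eI1 : I1 (n + 1) = I1 n := by simp only [hI1, Fin.mk.injEq, hdiv]
        have eI2 : I2 (n + 1) = I2 n := by simp only [hI2, Fin.mk.injEq, hdiv]
        simp only [hF, if_pos hnA, if_pos hc1, hmod, eI1, eI2]
        rw [valeq _ _ _ _ _ (hI12 n hnA), valeq _ _ _ _ _ (hI12 n hnA)]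
        have c1 : ((ρ + (n % d + 1) : ℕ) : ℤ) = ((ρ + n % d : ℕ) : ℤ) + 1 := by push_cast; ring
        have c2 : ((r - (n % d + 1) : ℕ) : ℤ) = ((r - n % d : ℕ) : ℤ) - 1 := by omega
        rw [c1, c2]
        have halt := hI21lt n hnA
        linarith only [halt]
      · -- n % d + 1 = d
        have hs2' : n % d + 1 = d := by omega
        have h1 : n + 1 = d * (n / d) + d := by omega
        have h2 : n + 1 = d * (n / d + 1) := by rw [Nat.mul_succ]; omega
        have hdiv : (n + 1) / d = n / d + 1 := by
          rw [h2, Nat.mul_div_cancel_left _ hd']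
        have hmod : (n + 1) % d = 0 := by rw [h2, Nat.mul_mod_right]
        have hq2 : (n + 1) / d < k - 1 := hqlt (n + 1) hc1
        have hq2' : n / d + 1 < k - 1 := by omega
        simp only [hF, if_pos hnA, if_pos hc1, hmod]
        have eI : I1 (n + 1) = I2 n := by
          simp only [hI1, hI2, Fin.mk.injEq]; omega
        have hne2 : I1 (n + 1) ≠ I2 (n + 1) := hI12 (n + 1) hc1
        have halt2 : a (I2 (n + 1)) < a (I1 (n + 1)) := hI21lt (n + 1) hc1
        have halt : a (I2 n) < a (I1 n) := hI21lt n hnA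
        rw [valeq _ _ _ _ _ (hI12 n hnA), valeq _ _ _ _ _ hne2, eI]
        have c1 : ((ρ + n % d : ℕ) : ℤ) = (ρ : ℤ) + (d : ℤ) - 1 := by omega
        have c2 : ((r - n % d : ℕ) : ℤ) = (r : ℤ) - (d : ℤ) + 1 := by omega
        have c3 : ((ρ + 0 : ℕ) : ℤ) = (ρ : ℤ) := by omega
        have c4 : ((r - 0 : ℕ) : ℤ) = (r : ℤ) := by omega
        rw [c1, c2, c3, c4]
        have crho : (ρ : ℤ) + (d : ℤ) = (r : ℤ) := by omega
        rw [← crho]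
        rw [eI] at halt2
        linarith only [halt, halt2]
    · -- n + 1 ≥ N1
      by_cases hnA : n < N1
      · -- boundary zone A → zone B : n + 1 = N1
        have hb : n + 1 = N1 := by omega
        have hFn1 : n + 1 < N := by omega
        simp only [hF, if_pos hnA, if_neg (by omega : ¬ n + 1 < N1), if_pos hFn1]
        have hj : n + 1 - N1 + 1 = 1 := by omega
        rw [hj]
        have hd' := hd0 n hnA
        have hN1e : (k - 1) * d = d * (k - 2) + d := by
          rw [show k - 1 = k - 2 + 1 from by omega, Nat.succ_mul, mul_comm]
        have hbb : n + 1 = (k - 1) * d := by rw [hb, hN1]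
        have hne : n = d * (k - 2) + (d - 1) := by omega
        have hdiv : n / d = k - 2 := by
          rw [hne, Nat.mul_add_div hd', Nat.div_eq_of_lt (by omega : d - 1 < d)]
          omega
        have hmodn : n % d = d - 1 := by
          rw [hne, Nat.mul_add_mod, Nat.mod_eq_of_lt (by omega : d - 1 < d)]
        have e1 : I1 n = z1 := by
          simp only [hI1, hz1, hdiv, Fin.mk.injEq]; omega
        have e2 : I2 n = z0 := by
          simp only [hI2, hz0, hdiv, Fin.mk.injEq]; omega
        rw [valeq _ _ _ _ _ (hI12 n hnA), valeq _ _ _ _ _ hz01, e1, e2]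
        have cx : ((h 1 - (k - 1) * r : ℕ) : ℤ) = (ρ : ℤ) := by omega
        have c1 : ((ρ + n % d : ℕ) : ℤ) = (ρ : ℤ) + (d : ℤ) - 1 := by omega
        have c2 : ((r - n % d : ℕ) : ℤ) = (r : ℤ) - (d : ℤ) + 1 := by omega
        rw [cx, c1, c2]
        have crho : (ρ : ℤ) + (d : ℤ) = (r : ℤ) := by omega
        rw [← crho]
        have halt : a z0 < a z1 := hamono (by simp [hz0, hz1, Fin.lt_def])
        linarith only [halt]
      · -- n ≥ N1
        by_cases hcB : n + 1 < N
        · -- zone B internal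
          simp only [hF, if_neg hnA, if_neg (by omega : ¬ n + 1 < N1),
            if_pos (by omega : n < N), if_pos hcB]
          have hj : n + 1 - N1 + 1 = (n - N1 + 1) + 1 := by omega
          rw [hj]
          have hj1 : 1 ≤ n - N1 + 1 := by omega
          have hj2 : n - N1 + 1 + 1 ≤ t := by omega
          have hlt : h (n - N1 + 1) < h (n - N1 + 1 + 1) :=
            hmlt _ _ hj1 (by omega) hj2
          have hb1 : (k - 1) * r ≤ h (n - N1 + 1) :=
            le_trans hlow (hmle 1 _ le_rfl hj1 (by omega))
          have hb2 : (k - 1) * r ≤ h (n - N1 + 1 + 1) :=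
            le_trans hlow (hmle 1 _ le_rfl (by omega) hj2)
          rw [valeq _ _ _ _ _ hz01, valeq _ _ _ _ _ hz01]
          have c1 : ((h (n - N1 + 1) - (k - 1) * r : ℕ) : ℤ)
              = (h (n - N1 + 1) : ℤ) - (((k - 1) * r : ℕ) : ℤ) := by omega
          have c2 : ((h (n - N1 + 1 + 1) - (k - 1) * r : ℕ) : ℤ)
              = (h (n - N1 + 1 + 1) : ℤ) - (((k - 1) * r : ℕ) : ℤ) := by omega
          rw [c1, c2]
          have hz0pos : 0 < a z0 := hapos z0
          have hkey : (0:ℤ) < ((h (n - N1 + 1 + 1) : ℤ) - (h (n - N1 + 1) : ℤ)) * a z0 :=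
            mul_pos (by have := hlt; omega) hz0pos
          linarith only [hkey]
        · -- n + 1 ≥ N
          by_cases hcC : n < N
          · have hjt : n - N1 + 1 = t := by omega
            simp only [hF, if_neg hnA, if_neg (by omega : ¬ n + 1 < N1), if_pos hcC,
              if_neg (by omega : ¬ n + 1 < N), hjt]
            have c : ((n + 1 - (N - 1) : ℕ) : ℤ) = 1 := by omega
            rw [c]
            linarith
          · simp only [hF, if_neg hnA, if_neg (by omega : ¬ n + 1 < N1), if_neg hcC,
              if_neg (by omega : ¬ n + 1 < N)]
            have c : ((n + 1 - (N - 1) : ℕ) : ℤ) = ((n - (N - 1) : ℕ) : ℤ) + 1 := by omega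
            rw [c]
            linarith
  -- counting
  have hfin := HSumset_finite r H A hApos
  have hsub : ↑((Finset.range N).image F) ⊆ HSumset r H A := by
    intro x hx
    simp only [Finset.coe_image, Set.mem_image, Finset.mem_coe, Finset.mem_range] at hx
    obtain ⟨n, hn, rfl⟩ := hx
    exact hmemF n hn
  have e1 : ((Finset.range N).image F).card = N := by
    rw [Finset.card_image_of_injective _ hstrict.injective, Finset.card_range]
  calc N = ((Finset.range N).image F).card := e1.symm
    _ = (↑((Finset.range N).image F) : Set ℤ).ncard := (Set.ncard_coe_finset _).symm
    _ ≤ (HSumset r H A).ncard := Set.ncard_le_ncard hsub hfin
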